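/- arXiv:1506.07641 — 2 statements merged into one kernel-verified Lean document; each statement's English description precedes it below -/
import Mathlib

section
/- There exist smooth vector fields a_α, D_α, d : ω → ℝ³ (α ∈ {1,2}) with a₁×a₂ ≠ 0 everywhere and d·(a₁×a₂) ≠ 0 everywhere, such that: a_α·a_β = a_{αβ}; D_α = (Λ_{σα} − B_{σα})a^σ + Λ_α n; and d = Δ_σ a^σ + (Δ+1)n, where a^σ := a^{σβ}a_β and n := (a₁×a₂)/|a₁×a₂|. Moreover, the vector fields ĝ_α(θ,ζ) := a_α(θ) + ζD_α(θ) and ĝ_3(θ,ζ) := d(θ) satisfy ĝ_i·ĝ_j = g_{ij} at every point of Ω, where g_{ij} is the shell metric. -/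
open Set
open scoped BigOperators

noncomputable section

/-- Euclidean dot product on ℝ³. -/
def dot3 (u v : Fin 3 → ℝ) : ℝ := ∑ m, u m * v m

/-- Cross product on ℝ³. -/
def cross3 (u v : Fin 3 → ℝ) : Fin 3 → ℝ :=
  ![u 1 * v 2 - u 2 * v 1, u 2 * v 0 - u 0 * v 2, u 0 * v 1 - u 1 * v 0]

/-- Euclidean norm on ℝ³. -/
def norm3 (u : Fin 3 → ℝ) : ℝ := Real.sqrt (dot3 u u)

/-- Partial derivative of a scalar field on ℝ². -/
def pd2 (α : Fin 2) (f : (Fin 2 → ℝ) → ℝ) (θ : Fin 2 → ℝ) : ℝ :=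
  fderiv ℝ f θ (Pi.single α 1)

/-- Partial derivative of a vector field on ℝ². -/
def vpd2 (α : Fin 2) (f : (Fin 2 → ℝ) → (Fin 3 → ℝ)) (θ : Fin 2 → ℝ) : Fin 3 → ℝ :=
  fderiv ℝ f θ (Pi.single α 1)

namespace Stmt3Aux

lemma dot3_comm (u v : Fin 3 → ℝ) : dot3 u v = dot3 v u := by
  simp [dot3, mul_comm]

lemma dot3_add_left (u v w : Fin 3 → ℝ) : dot3 (u + v) w = dot3 u w + dot3 v w := by
  simp [dot3, add_mul, Finset.sum_add_distrib]

lemma dot3_add_right (u v w : Fin 3 → ℝ) : dot3 u (v + w) = dot3 u v + dot3 u w := by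
  simp [dot3, mul_add, Finset.sum_add_distrib]

lemma dot3_smul_left (c : ℝ) (u v : Fin 3 → ℝ) : dot3 (c • u) v = c * dot3 u v := by
  simp [dot3, Finset.mul_sum, mul_assoc]

lemma dot3_smul_right (c : ℝ) (u v : Fin 3 → ℝ) : dot3 u (c • v) = c * dot3 u v := by
  simp [dot3, Finset.mul_sum]; ring_nf
  simp [mul_comm, mul_left_comm]

lemma dot3_self_pos {u : Fin 3 → ℝ} (h : u ≠ 0) : 0 < dot3 u u := by
  obtain ⟨k, hk⟩ : ∃ k, u k ≠ 0 := by
    by_contra hall; push_neg at hall; exact h (funext fun k => hall k)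
  exact Finset.sum_pos' (fun i _ => mul_self_nonneg _)
    ⟨k, Finset.mem_univ k, mul_self_pos.mpr hk⟩

lemma dot3_cross_left (u v : Fin 3 → ℝ) : dot3 (cross3 u v) u = 0 := by
  simp [dot3, cross3, Fin.sum_univ_three]; ring

lemma dot3_cross_left' (u v : Fin 3 → ℝ) : dot3 (cross3 u v) v = 0 := by
  simp [dot3, cross3, Fin.sum_univ_three]; ring

lemma cross3_ne_zero {u v : Fin 3 → ℝ}
    (h : ∀ c₀ c₁ : ℝ, c₀ • u + c₁ • v = 0 → c₀ = 0 ∧ c₁ = 0) : cross3 u v ≠ 0 := by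
  intro hc
  have hu : u ≠ 0 := by
    intro h0
    have := (h 1 0 (by simp [h0])).1
    norm_num at this
  obtain ⟨m, hm⟩ : ∃ m, u m ≠ 0 := by
    by_contra hall; push_neg at hall; exact hu (funext fun k => hall k)
  have h0 := congrFun hc 0
  have h1 := congrFun hc 1
  have h2 := congrFun hc 2
  simp [cross3] at h0 h1 h2
  have key : ∀ k, u m * v k = v m * u k := by
    intro k
    fin_cases m <;> fin_cases k <;> simp at hm ⊢ <;> nlinarith [h0, h1, h2]
  have hz : (-(v m)) • u + (u m) • v = 0 := by
    funext k
    have := key k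
    simp
    linarith
  exact hm (h _ _ hz).2

variable {n : WithTop ℕ∞} {s : Set (Fin 2 → ℝ)}

lemma contDiffOn_dot3 {f g : (Fin 2 → ℝ) → Fin 3 → ℝ}
    (hf : ContDiffOn ℝ n f s) (hg : ContDiffOn ℝ n g s) :
    ContDiffOn ℝ n (fun x => dot3 (f x) (g x)) s := by
  simp only [dot3]
  exact ContDiffOn.sum fun m _ => (contDiffOn_pi.1 hf m).mul (contDiffOn_pi.1 hg m)

lemma contDiffOn_cross3 {f g : (Fin 2 → ℝ) → Fin 3 → ℝ}
    (hf : ContDiffOn ℝ n f s) (hg : ContDiffOn ℝ n g s) :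
    ContDiffOn ℝ n (fun x => cross3 (f x) (g x)) s := by
  rw [contDiffOn_pi]
  intro i
  fin_cases i <;> simp only [cross3, Matrix.cons_val_zero, Matrix.cons_val_one,
    Matrix.head_cons, Fin.isValue] <;>
  exact ((contDiffOn_pi.1 hf _).mul (contDiffOn_pi.1 hg _)).sub
    ((contDiffOn_pi.1 hf _).mul (contDiffOn_pi.1 hg _))

lemma hasfd_proj3 {f : (Fin 2 → ℝ) → Fin 3 → ℝ} {x} (hf : DifferentiableAt ℝ f x) (m : Fin 3) :
    HasFDerivAt (fun θ => f θ m) ((ContinuousLinearMap.proj m).comp (fderiv ℝ f x)) x := by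
  have h := (ContinuousLinearMap.hasFDerivAt
    (f := ContinuousLinearMap.proj (R := ℝ) (φ := fun _ : Fin 3 => ℝ) m)
    (x := f x)).comp x hf.hasFDerivAt
  exact h

lemma fderiv_proj3 {f : (Fin 2 → ℝ) → Fin 3 → ℝ} {x} (hf : DifferentiableAt ℝ f x) (m : Fin 3)
    (v : Fin 2 → ℝ) : fderiv ℝ (fun θ => f θ m) x v = fderiv ℝ f x v m := by
  rw [(hasfd_proj3 hf m).fderiv]; rfl

lemma diff_proj3 {f : (Fin 2 → ℝ) → Fin 3 → ℝ} {x} (hf : DifferentiableAt ℝ f x) (m : Fin 3) :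
    DifferentiableAt ℝ (fun θ => f θ m) x := (hasfd_proj3 hf m).differentiableAt

lemma fderiv_dot3 {f g : (Fin 2 → ℝ) → Fin 3 → ℝ} {x} (hf : DifferentiableAt ℝ f x)
    (hg : DifferentiableAt ℝ g x) (v : Fin 2 → ℝ) :
    fderiv ℝ (fun θ => dot3 (f θ) (g θ)) x v
      = dot3 (fderiv ℝ f x v) (g x) + dot3 (f x) (fderiv ℝ g x v) := by
  simp only [dot3]
  rw [fderiv_fun_sum (fun m _ => ((diff_proj3 hf m).fun_mul (diff_proj3 hg m)))]
  rw [ContinuousLinearMap.sum_apply]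
  rw [← Finset.sum_add_distrib]
  congr 1
  ext m
  rw [fderiv_fun_mul (diff_proj3 hf m) (diff_proj3 hg m)]
  simp [fderiv_proj3 hf m v, fderiv_proj3 hg m v]
  ring

/-- explicit Cholesky-type square root frame for the metric `amat`. -/
def aVec (amat : (Fin 2 → ℝ) → Matrix (Fin 2) (Fin 2) ℝ) : Fin 2 → (Fin 2 → ℝ) → Fin 3 → ℝ :=
  ![fun θ => ![Real.sqrt (amat θ 0 0), 0, 0],
    fun θ => ![amat θ 0 1 / Real.sqrt (amat θ 0 0),
               Real.sqrt ((amat θ).det) / Real.sqrt (amat θ 0 0), 0]]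

def bVec (amat : (Fin 2 → ℝ) → Matrix (Fin 2) (Fin 2) ℝ) (σ : Fin 2) (θ : Fin 2 → ℝ) :
    Fin 3 → ℝ := ∑ β, (amat θ)⁻¹ σ β • aVec amat β θ

def nVec (amat : (Fin 2 → ℝ) → Matrix (Fin 2) (Fin 2) ℝ) (θ : Fin 2 → ℝ) : Fin 3 → ℝ :=
  (norm3 (cross3 (aVec amat 0 θ) (aVec amat 1 θ)))⁻¹ • cross3 (aVec amat 0 θ) (aVec amat 1 θ)



section PointFacts

variable {amat : (Fin 2 → ℝ) → Matrix (Fin 2) (Fin 2) ℝ} {θ : Fin 2 → ℝ}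

lemma aVec_third (α : Fin 2) : aVec amat α θ 2 = 0 := by
  fin_cases α <;> simp [aVec]

lemma aVec_dot (h00 : 0 < amat θ 0 0) (hdet : 0 < (amat θ).det)
    (hsym : amat θ 1 0 = amat θ 0 1) (α β : Fin 2) :
    dot3 (aVec amat α θ) (aVec amat β θ) = amat θ α β := by
  have hs0 : Real.sqrt (amat θ 0 0) ≠ 0 := (Real.sqrt_pos.2 h00).ne'
  have hs2 : Real.sqrt (amat θ 0 0) * Real.sqrt (amat θ 0 0) = amat θ 0 0 :=
    Real.mul_self_sqrt h00.le
  have ht2 : Real.sqrt ((amat θ).det) * Real.sqrt ((amat θ).det) = (amat θ).det :=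
    Real.mul_self_sqrt hdet.le
  have hdd : (amat θ).det = amat θ 0 0 * amat θ 1 1 - amat θ 0 1 * amat θ 0 1 := by
    rw [Matrix.det_fin_two, hsym]
  fin_cases α <;> fin_cases β <;>
    simp [aVec, dot3, Fin.sum_univ_three] <;>
    field_simp <;>
    nlinarith [hs2, ht2, hdd, hsym, Real.sqrt_nonneg (amat θ 0 0), Real.sqrt_nonneg ((amat θ).det)]

lemma cross3_aVec (h00 : 0 < amat θ 0 0) :
    cross3 (aVec amat 0 θ) (aVec amat 1 θ) = ![0, 0, Real.sqrt ((amat θ).det)] := by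
  have hs0 : Real.sqrt (amat θ 0 0) ≠ 0 := (Real.sqrt_pos.2 h00).ne'
  funext k
  fin_cases k <;> simp [cross3, aVec] <;> field_simp

lemma norm3_cross_aVec (h00 : 0 < amat θ 0 0) (hdet : 0 < (amat θ).det) :
    norm3 (cross3 (aVec amat 0 θ) (aVec amat 1 θ)) = Real.sqrt ((amat θ).det) := by
  rw [cross3_aVec h00]
  have : dot3 ![0, 0, Real.sqrt ((amat θ).det)] ![0, 0, Real.sqrt ((amat θ).det)]
      = Real.sqrt ((amat θ).det) ^ 2 := by
    simp [dot3, Fin.sum_univ_three]; ring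
  rw [norm3, this, Real.sqrt_sq (Real.sqrt_nonneg _)]

lemma nVec_eq (h00 : 0 < amat θ 0 0) (hdet : 0 < (amat θ).det) :
    nVec amat θ = ![0, 0, 1] := by
  have htpos : 0 < Real.sqrt ((amat θ).det) := Real.sqrt_pos.2 hdet
  rw [nVec, norm3_cross_aVec h00 hdet, cross3_aVec h00]
  funext k
  fin_cases k <;> simp [inv_mul_cancel₀ htpos.ne']

lemma bVec_third (σ : Fin 2) : bVec amat σ θ 2 = 0 := by
  simp [bVec, Fin.sum_univ_two, aVec_third]

lemma bVec_dot_aVec (hmul : (amat θ)⁻¹ * amat θ = 1)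
    (h00 : 0 < amat θ 0 0) (hdet : 0 < (amat θ).det)
    (hsym : amat θ 1 0 = amat θ 0 1) (σ β : Fin 2) :
    dot3 (bVec amat σ θ) (aVec amat β θ) = if σ = β then 1 else 0 := by
  have : dot3 (bVec amat σ θ) (aVec amat β θ) = ((amat θ)⁻¹ * amat θ) σ β := by
    simp [bVec, Fin.sum_univ_two, dot3_add_left, dot3_smul_left,
      aVec_dot h00 hdet hsym, Matrix.mul_apply]
  rw [this, hmul, Matrix.one_apply]

lemma bVec_dot_bVec (hmul : (amat θ)⁻¹ * amat θ = 1)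
    (h00 : 0 < amat θ 0 0) (hdet : 0 < (amat θ).det)
    (hsym : amat θ 1 0 = amat θ 0 1)
    (hinvsym : (amat θ)⁻¹ 1 0 = (amat θ)⁻¹ 0 1) (σ γ : Fin 2) :
    dot3 (bVec amat σ θ) (bVec amat γ θ) = (amat θ)⁻¹ σ γ := by
  have h := bVec_dot_aVec hmul h00 hdet hsym
  have hexp : bVec amat γ θ
      = (amat θ)⁻¹ γ 0 • aVec amat 0 θ + (amat θ)⁻¹ γ 1 • aVec amat 1 θ := by
    simp [bVec, Fin.sum_univ_two]
  calc dot3 (bVec amat σ θ) (bVec amat γ θ)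
      = (amat θ)⁻¹ γ 0 * dot3 (bVec amat σ θ) (aVec amat 0 θ)
        + (amat θ)⁻¹ γ 1 * dot3 (bVec amat σ θ) (aVec amat 1 θ) := by
        rw [hexp, dot3_add_right, dot3_smul_right, dot3_smul_right]
    _ = (amat θ)⁻¹ γ σ := by rw [h, h]; fin_cases σ <;> fin_cases γ <;> simp
    _ = (amat θ)⁻¹ σ γ := by fin_cases σ <;> fin_cases γ <;> simp [hinvsym]

lemma dot3_nVec_aVec (h00 : 0 < amat θ 0 0) (hdet : 0 < (amat θ).det) (β : Fin 2) :
    dot3 (nVec amat θ) (aVec amat β θ) = 0 := by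
  rw [nVec_eq h00 hdet]
  simp [dot3, Fin.sum_univ_three, aVec_third]

lemma dot3_nVec_bVec (h00 : 0 < amat θ 0 0) (hdet : 0 < (amat θ).det) (σ : Fin 2) :
    dot3 (nVec amat θ) (bVec amat σ θ) = 0 := by
  rw [nVec_eq h00 hdet]
  simp [dot3, Fin.sum_univ_three, bVec_third]

lemma dot3_nVec_nVec (h00 : 0 < amat θ 0 0) (hdet : 0 < (amat θ).det) :
    dot3 (nVec amat θ) (nVec amat θ) = 1 := by
  rw [nVec_eq h00 hdet]
  simp [dot3, Fin.sum_univ_three]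

end PointFacts
end Stmt3Aux

/-- Theorem 3.1(i): the shell metric built from the 2-d strain measures is the Gram matrix
of a Cosserat-type frame `ĝ_α = a_α + ζ D_α`, `ĝ_3 = d` with the stated representations of
`D_α` and `d`. -/
theorem stmt3
    -- the mid-surface domain
    (ω : Set (Fin 2 → ℝ)) (hωo : IsOpen ω) (hωb : Bornology.IsBounded ω)
    (hωsc : SimplyConnectedSpace ω)
    -- the half-thickness
    (ht : ℝ) (hht : 0 < ht)
    -- the mid-surface parametrization
    (R : (Fin 2 → ℝ) → Fin 3 → ℝ)
    (hRs : ContDiffOn ℝ (⊤ : ℕ∞) R ω) (hRinj : Set.InjOn R ω)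
    (hRimm : ∀ θ ∈ ω, Function.Injective (fderiv ℝ R θ))
    -- tangent vectors A_α, unit normal N, second fundamental form B_{αβ}
    (A : Fin 2 → (Fin 2 → ℝ) → Fin 3 → ℝ) (hA : ∀ α θ, A α θ = vpd2 α R θ)
    (N : (Fin 2 → ℝ) → Fin 3 → ℝ)
    (hN : ∀ θ, N θ = (norm3 (cross3 (A 0 θ) (A 1 θ)))⁻¹ • cross3 (A 0 θ) (A 1 θ))
    (Bf : Fin 2 → Fin 2 → (Fin 2 → ℝ) → ℝ)
    (hBf : ∀ α β θ, Bf α β θ = -(dot3 (vpd2 β N θ) (A α θ)))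
    -- the 2-d strain fields
    (E : Fin 2 → Fin 2 → (Fin 2 → ℝ) → ℝ)
    (Δv : Fin 2 → (Fin 2 → ℝ) → ℝ) (Δ : (Fin 2 → ℝ) → ℝ)
    (Λm : Fin 2 → Fin 2 → (Fin 2 → ℝ) → ℝ) (Λv : Fin 2 → (Fin 2 → ℝ) → ℝ)
    (hEs : ∀ α β, ContDiffOn ℝ (⊤ : ℕ∞) (E α β) ω)
    (hΔvs : ∀ α, ContDiffOn ℝ (⊤ : ℕ∞) (Δv α) ω)
    (hΔs : ContDiffOn ℝ (⊤ : ℕ∞) Δ ω)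
    (hΛms : ∀ α β, ContDiffOn ℝ (⊤ : ℕ∞) (Λm α β) ω)
    (hΛvs : ∀ α, ContDiffOn ℝ (⊤ : ℕ∞) (Λv α) ω)
    (hEsym : ∀ α β θ, E α β θ = E β α θ)
    (hΔne : ∀ θ ∈ ω, Δ θ ≠ -1)
    -- a_{αβ} := A_{αβ} + 2E_{αβ}, positive definite
    (amat : (Fin 2 → ℝ) → Matrix (Fin 2) (Fin 2) ℝ)
    (hamat : ∀ θ α β, amat θ α β = dot3 (A α θ) (A β θ) + 2 * E α β θ)
    (hapos : ∀ θ ∈ ω, (amat θ).PosDef)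
    -- the coefficient fields P, Q, U, V of the shell metric
    (P : Fin 2 → Fin 2 → (Fin 2 → ℝ) → ℝ)
    (hP : ∀ α β θ, P α β θ = 2 * ((Λm α β θ + Λm β α θ) / 2 - Bf α β θ))
    (Q : Fin 2 → Fin 2 → (Fin 2 → ℝ) → ℝ)
    (hQ : ∀ α β θ, Q α β θ =
      (∑ σ, ∑ γ, (amat θ)⁻¹ σ γ * (Λm σ α θ - Bf σ α θ) * (Λm γ β θ - Bf γ β θ))
        + Λv α θ * Λv β θ)
    (U : Fin 2 → (Fin 2 → ℝ) → ℝ)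
    (hU : ∀ α θ, U α θ =
      (∑ σ, ∑ γ, (amat θ)⁻¹ σ γ * Δv σ θ * (Λm γ α θ - Bf γ α θ)) + Λv α θ * (Δ θ + 1))
    (V : (Fin 2 → ℝ) → ℝ)
    (hV : ∀ θ, V θ = (∑ α, ∑ β, (amat θ)⁻¹ α β * Δv α θ * Δv β θ) + (Δ θ + 1) ^ 2)
    -- the shell metric
    (gm : (Fin 2 → ℝ) → ℝ → Matrix (Fin 3) (Fin 3) ℝ)
    (hgmab : ∀ θ ζ (α β : Fin 2), gm θ ζ α.castSucc β.castSucc =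
      amat θ α β + ζ * P α β θ + ζ ^ 2 * Q α β θ)
    (hgma3 : ∀ θ ζ (α : Fin 2), gm θ ζ α.castSucc 2 = Δv α θ + ζ * U α θ)
    (hgm3a : ∀ θ ζ (α : Fin 2), gm θ ζ 2 α.castSucc = Δv α θ + ζ * U α θ)
    (hgm33 : ∀ θ ζ, gm θ ζ 2 2 = V θ)
    (hgpos : ∀ θ ∈ ω, ∀ ζ ∈ Ioo (-ht) ht, (gm θ ζ).PosDef) :
    ∃ a : Fin 2 → (Fin 2 → ℝ) → Fin 3 → ℝ, ∃ D : Fin 2 → (Fin 2 → ℝ) → Fin 3 → ℝ,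
      ∃ d : (Fin 2 → ℝ) → Fin 3 → ℝ,
      (∀ α, ContDiffOn ℝ (⊤ : ℕ∞) (a α) ω) ∧
      (∀ α, ContDiffOn ℝ (⊤ : ℕ∞) (D α) ω) ∧
      ContDiffOn ℝ (⊤ : ℕ∞) d ω ∧
      (∀ θ ∈ ω, cross3 (a 0 θ) (a 1 θ) ≠ 0) ∧
      (∀ θ ∈ ω, dot3 (d θ) (cross3 (a 0 θ) (a 1 θ)) ≠ 0) ∧
      -- a_α · a_β = a_{αβ}
      (∀ θ ∈ ω, ∀ α β : Fin 2, dot3 (a α θ) (a β θ) = amat θ α β) ∧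
      -- D_α = (Λ_{σα} − B_{σα}) a^σ + Λ_α n
      (∀ θ ∈ ω, ∀ α : Fin 2, D α θ =
        (∑ σ, (Λm σ α θ - Bf σ α θ) • (∑ β, (amat θ)⁻¹ σ β • a β θ))
          + Λv α θ • ((norm3 (cross3 (a 0 θ) (a 1 θ)))⁻¹ • cross3 (a 0 θ) (a 1 θ))) ∧
      -- d = Δ_σ a^σ + (Δ + 1) n
      (∀ θ ∈ ω, d θ =
        (∑ σ, Δv σ θ • (∑ β, (amat θ)⁻¹ σ β • a β θ))
          + (Δ θ + 1) • ((norm3 (cross3 (a 0 θ) (a 1 θ)))⁻¹ • cross3 (a 0 θ) (a 1 θ))) ∧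
      -- ĝ_i · ĝ_j = g_{ij} at every point of Ω
      (∀ θ ∈ ω, ∀ ζ ∈ Ioo (-ht) ht, ∀ i j : Fin 3,
        dot3 (![a 0 θ + ζ • D 0 θ, a 1 θ + ζ • D 1 θ, d θ] i)
             (![a 0 θ + ζ • D 0 θ, a 1 θ + ζ • D 1 θ, d θ] j) = gm θ ζ i j) := by
    classical
  have h1inf : (1 : WithTop ℕ∞) ≤ ((⊤:ℕ∞) : WithTop ℕ∞) := by norm_cast
  have h2inf : (2 : WithTop ℕ∞) ≤ ((⊤:ℕ∞) : WithTop ℕ∞) := by norm_cast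
  have hEinf : ((⊤:ℕ∞) : WithTop ℕ∞) + 1 ≤ ((⊤:ℕ∞) : WithTop ℕ∞) := le_of_eq rfl
  have hAfun : ∀ α, A α = fun θ => fderiv ℝ R θ (Pi.single α 1) := fun α => funext (hA α)
  have hAsm : ∀ α, ContDiffOn ℝ (⊤:ℕ∞) (A α) ω := by
    intro α; rw [hAfun α]
    exact (hRs.fderiv_of_isOpen hωo hEinf).clm_apply contDiffOn_const
  have hamat_symm : ∀ θ, amat θ 1 0 = amat θ 0 1 := by
    intro θ; rw [hamat θ 1 0, hamat θ 0 1, hEsym 1 0, Stmt3Aux.dot3_comm]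
  have ha00 : ∀ θ ∈ ω, 0 < amat θ 0 0 := by
    intro θ hθ
    have hx : (Pi.single 0 1 : Fin 2 → ℝ) ≠ 0 := by
      intro h; have := congrFun h 0; simp at this
    have h := (hapos θ hθ).dotProduct_mulVec_pos hx
    simpa [Matrix.mulVec, dotProduct, Fin.sum_univ_two] using h
  have hdet : ∀ θ ∈ ω, 0 < (amat θ).det := fun θ hθ => (hapos θ hθ).det_pos
  have hmul1 : ∀ θ ∈ ω, (amat θ)⁻¹ * amat θ = 1 := fun θ hθ =>
    Matrix.nonsing_inv_mul _ (hdet θ hθ).ne'.isUnit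
  have hinvsym : ∀ θ ∈ ω, (amat θ)⁻¹ 1 0 = (amat θ)⁻¹ 0 1 := by
    intro θ hθ
    have hsymM : Matrix.transpose (amat θ) = amat θ := by
      ext i j; fin_cases i <;> fin_cases j <;>
        simp [Matrix.transpose_apply, hamat_symm θ]
    have h1 : Matrix.transpose ((amat θ)⁻¹) = (amat θ)⁻¹ := by
      rw [Matrix.transpose_nonsing_inv, hsymM]
    have h2 := congrFun (congrFun h1 0) 1
    simpa [Matrix.transpose_apply] using h2
  have hamat_sm : ∀ α β, ContDiffOn ℝ (⊤:ℕ∞) (fun θ => amat θ α β) ω := by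
    intro α β
    have hfe : (fun θ => amat θ α β) = fun θ => dot3 (A α θ) (A β θ) + 2 * E α β θ :=
      funext fun θ => hamat θ α β
    rw [hfe]
    exact (Stmt3Aux.contDiffOn_dot3 (hAsm α) (hAsm β)).add (contDiffOn_const.mul (hEs α β))
  have hdet_sm : ContDiffOn ℝ (⊤:ℕ∞) (fun θ => (amat θ).det) ω := by
    have hfe : (fun θ => (amat θ).det)
        = fun θ => amat θ 0 0 * amat θ 1 1 - amat θ 0 1 * amat θ 1 0 :=
      funext fun θ => Matrix.det_fin_two _
    rw [hfe]
    exact ((hamat_sm 0 0).mul (hamat_sm 1 1)).sub ((hamat_sm 0 1).mul (hamat_sm 1 0))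
  have hdet_ne : ∀ θ ∈ ω, (amat θ).det ≠ 0 := fun θ hθ => (hdet θ hθ).ne'
  have hinv_sm : ∀ σ β : Fin 2, ContDiffOn ℝ (⊤:ℕ∞) (fun θ => (amat θ)⁻¹ σ β) ω := by
    intro σ β
    have hgood : ContDiffOn ℝ (⊤:ℕ∞)
        (fun θ => ((amat θ).det)⁻¹
          * (!![amat θ 1 1, -(amat θ 0 1); -(amat θ 1 0), amat θ 0 0]) σ β) ω := by
      fin_cases σ <;> fin_cases β <;>
        simp only [Matrix.cons_val', Matrix.cons_val_zero, Matrix.cons_val_one,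
          Matrix.head_cons, Matrix.empty_val', Matrix.cons_val_fin_one, Matrix.head_fin_const,
          Fin.isValue, Matrix.of_apply, Matrix.cons_val_fin_one] <;>
        first
        | exact (hdet_sm.inv hdet_ne).mul (hamat_sm 1 1)
        | exact (hdet_sm.inv hdet_ne).mul (hamat_sm 0 1).neg
        | exact (hdet_sm.inv hdet_ne).mul (hamat_sm 1 0).neg
        | exact (hdet_sm.inv hdet_ne).mul (hamat_sm 0 0)
    apply hgood.congr
    intro θ hθ
    rw [Matrix.inv_def, Matrix.adjugate_fin_two, Ring.inverse_eq_inv]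
    simp [Matrix.smul_apply, smul_eq_mul]
  have hs_sm : ContDiffOn ℝ (⊤:ℕ∞) (fun θ => Real.sqrt (amat θ 0 0)) ω :=
    (hamat_sm 0 0).sqrt (fun θ hθ => (ha00 θ hθ).ne')
  have ht_sm : ContDiffOn ℝ (⊤:ℕ∞) (fun θ => Real.sqrt ((amat θ).det)) ω :=
    hdet_sm.sqrt (fun θ hθ => (hdet θ hθ).ne')
  have hs_ne : ∀ θ ∈ ω, Real.sqrt (amat θ 0 0) ≠ 0 := fun θ hθ =>
    (Real.sqrt_pos.2 (ha00 θ hθ)).ne'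
  have haSm : ∀ α, ContDiffOn ℝ (⊤:ℕ∞) (Stmt3Aux.aVec amat α) ω := by
    intro α
    fin_cases α <;> rw [contDiffOn_pi] <;> intro i <;> fin_cases i <;>
      simp only [Stmt3Aux.aVec, Matrix.cons_val_zero, Matrix.cons_val_one, Matrix.head_cons,
        Fin.isValue]
    · exact hs_sm
    · exact contDiffOn_const
    · exact contDiffOn_const
    · exact (hamat_sm 0 1).div hs_sm hs_ne
    · exact ht_sm.div hs_sm hs_ne
    · exact contDiffOn_const
  have hbSm : ∀ σ, ContDiffOn ℝ (⊤:ℕ∞) (Stmt3Aux.bVec amat σ) ω := by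
    intro σ
    have hfe : Stmt3Aux.bVec amat σ
        = fun θ => ∑ β, (amat θ)⁻¹ σ β • Stmt3Aux.aVec amat β θ := rfl
    rw [hfe]
    exact ContDiffOn.sum fun β _ => (hinv_sm σ β).smul (haSm β)
  have hnV : ∀ θ ∈ ω, Stmt3Aux.nVec amat θ = ![0,0,1] := fun θ hθ =>
    Stmt3Aux.nVec_eq (ha00 θ hθ) (hdet θ hθ)
  -- smoothness of N and Bf
  have hcA_sm : ContDiffOn ℝ (⊤:ℕ∞) (fun θ => cross3 (A 0 θ) (A 1 θ)) ω :=
    Stmt3Aux.contDiffOn_cross3 (hAsm 0) (hAsm 1)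
  have hcA_ne : ∀ θ ∈ ω, cross3 (A 0 θ) (A 1 θ) ≠ 0 := by
    intro θ hθ
    apply Stmt3Aux.cross3_ne_zero
    intro c0 c1 hc
    have hAv : ∀ α, A α θ = fderiv ℝ R θ (Pi.single α 1) := fun α => hA α θ
    have hc' : fderiv ℝ R θ (c0 • (Pi.single 0 1 : Fin 2 → ℝ) + c1 • (Pi.single 1 1 : Fin 2 → ℝ))
        = fderiv ℝ R θ 0 := by
      rw [map_add, map_smul, map_smul, map_zero, ← hAv 0, ← hAv 1]
      exact hc
    have hL : c0 • (Pi.single 0 1 : Fin 2 → ℝ) + c1 • (Pi.single 1 1 : Fin 2 → ℝ) = (0 : Fin 2 → ℝ) :=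
      hRimm θ hθ hc'
    constructor
    · have h0 := congrFun hL 0
      simpa using h0
    · have h1 := congrFun hL 1
      simpa using h1
  have hccA_pos : ∀ θ ∈ ω,
      0 < dot3 (cross3 (A 0 θ) (A 1 θ)) (cross3 (A 0 θ) (A 1 θ)) :=
    fun θ hθ => Stmt3Aux.dot3_self_pos (hcA_ne θ hθ)
  have hNfun : N = fun θ => (Real.sqrt (dot3 (cross3 (A 0 θ) (A 1 θ))
      (cross3 (A 0 θ) (A 1 θ))))⁻¹ • cross3 (A 0 θ) (A 1 θ) := funext fun θ => hN θ
  have hNsm : ContDiffOn ℝ (⊤:ℕ∞) N ω := by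
    rw [hNfun]
    exact (((Stmt3Aux.contDiffOn_dot3 hcA_sm hcA_sm).sqrt
      (fun θ hθ => (hccA_pos θ hθ).ne')).inv
      (fun θ hθ => (Real.sqrt_pos.2 (hccA_pos θ hθ)).ne')).smul hcA_sm
  have hvN_sm : ∀ β, ContDiffOn ℝ (⊤:ℕ∞) (fun θ => vpd2 β N θ) ω := fun β =>
    (hNsm.fderiv_of_isOpen hωo hEinf).clm_apply contDiffOn_const
  have hB_sm : ∀ α β, ContDiffOn ℝ (⊤:ℕ∞) (Bf α β) ω := by
    intro α β
    have hfe : Bf α β = fun θ => -(dot3 (vpd2 β N θ) (A α θ)) := funext fun θ => hBf α β θ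
    rw [hfe]
    exact (Stmt3Aux.contDiffOn_dot3 (hvN_sm β) (hAsm α)).neg
  -- symmetry of Bf on ω
  have hNA0 : ∀ α θ, dot3 (N θ) (A α θ) = 0 := by
    intro α θ
    rw [hN θ, Stmt3Aux.dot3_smul_left]
    have hz : dot3 (cross3 (A 0 θ) (A 1 θ)) (A α θ) = 0 := by
      fin_cases α
      · exact Stmt3Aux.dot3_cross_left _ _
      · exact Stmt3Aux.dot3_cross_left' _ _
    rw [hz, mul_zero]
  have hBsym : ∀ θ ∈ ω, ∀ α β, Bf α β θ = Bf β α θ := by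
    intro θ hθ α β
    have hdA : ∀ γ, DifferentiableAt ℝ (A γ) θ := fun γ =>
      (((hAsm γ) θ hθ).contDiffAt (hωo.mem_nhds hθ)).differentiableAt (by simp)
    have hdN : DifferentiableAt ℝ N θ :=
      ((hNsm θ hθ).contDiffAt (hωo.mem_nhds hθ)).differentiableAt (by simp)
    have hkey : ∀ γ δ, Bf γ δ θ = dot3 (N θ) (fderiv ℝ (A γ) θ (Pi.single δ 1)) := by
      intro γ δ
      have hz : (fun θ => dot3 (N θ) (A γ θ)) = fun _ => (0:ℝ) :=
        funext fun θ' => hNA0 γ θ'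
      have h0 : fderiv ℝ (fun θ => dot3 (N θ) (A γ θ)) θ (Pi.single δ 1) = 0 := by
        rw [hz]; simp
      rw [Stmt3Aux.fderiv_dot3 hdN (hdA γ) _] at h0
      rw [hBf γ δ θ]
      unfold vpd2
      linarith [h0]
    have hdF : DifferentiableAt ℝ (fderiv ℝ R) θ :=
      (((hRs θ hθ).contDiffAt (hωo.mem_nhds hθ)).fderiv_right hEinf).differentiableAt (by simp)
    have hvA : ∀ γ δ : Fin 2, fderiv ℝ (A γ) θ (Pi.single δ 1)
        = fderiv ℝ (fderiv ℝ R) θ (Pi.single δ 1) (Pi.single γ 1) := by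
      intro γ δ
      rw [hAfun γ]
      rw [fderiv_clm_apply hdF (differentiableAt_const _)]
      simp
    have hsymm := ((hRs θ hθ).contDiffAt (hωo.mem_nhds hθ)).isSymmSndFDerivAt (by simpa using h2inf)
    rw [hkey α β, hkey β α, hvA α β, hvA β α,
      hsymm (Pi.single β 1) (Pi.single α 1)]
  -- the frame
  refine ⟨Stmt3Aux.aVec amat,
    fun α θ => (∑ σ, (Λm σ α θ - Bf σ α θ) • Stmt3Aux.bVec amat σ θ)
      + Λv α θ • Stmt3Aux.nVec amat θ,
    fun θ => (∑ σ, Δv σ θ • Stmt3Aux.bVec amat σ θ)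
      + (Δ θ + 1) • Stmt3Aux.nVec amat θ,
    haSm, ?_, ?_, ?_, ?_, ?_, ?_, ?_, ?_⟩
  · -- smoothness of D
    intro α
    have hgood : ContDiffOn ℝ (⊤:ℕ∞)
        (fun θ => (∑ σ, (Λm σ α θ - Bf σ α θ) • Stmt3Aux.bVec amat σ θ)
          + Λv α θ • (![0,0,1] : Fin 3 → ℝ)) ω :=
      (ContDiffOn.sum fun σ _ => ((hΛms σ α).sub (hB_sm σ α)).smul (hbSm σ)).add
        ((hΛvs α).smul contDiffOn_const)
    apply hgood.congr
    intro θ hθ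
    simp only [hnV θ hθ]
  · -- smoothness of d
    have hgood : ContDiffOn ℝ (⊤:ℕ∞)
        (fun θ => (∑ σ, Δv σ θ • Stmt3Aux.bVec amat σ θ)
          + (Δ θ + 1) • (![0,0,1] : Fin 3 → ℝ)) ω :=
      (ContDiffOn.sum fun σ _ => (hΔvs σ).smul (hbSm σ)).add
        ((hΔs.add contDiffOn_const).smul contDiffOn_const)
    apply hgood.congr
    intro θ hθ
    simp only [hnV θ hθ]
  · -- cross product nonzero
    intro θ hθ
    rw [Stmt3Aux.cross3_aVec (ha00 θ hθ)]
    intro h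
    have h2 := congrFun h 2
    simp at h2
    exact (Real.sqrt_pos.2 (hdet θ hθ)).ne' h2
  · -- d not tangent
    intro θ hθ
    rw [Stmt3Aux.cross3_aVec (ha00 θ hθ)]
    have h3 : ((∑ σ, Δv σ θ • Stmt3Aux.bVec amat σ θ)
        + (Δ θ + 1) • Stmt3Aux.nVec amat θ) 2 = Δ θ + 1 := by
      rw [hnV θ hθ]
      simp [Fin.sum_univ_two, Stmt3Aux.bVec_third]
    have hD : dot3 ((∑ σ, Δv σ θ • Stmt3Aux.bVec amat σ θ)
        + (Δ θ + 1) • Stmt3Aux.nVec amat θ) ![0, 0, Real.sqrt ((amat θ).det)]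
        = (Δ θ + 1) * Real.sqrt ((amat θ).det) := by
      rw [show dot3 ((∑ σ, Δv σ θ • Stmt3Aux.bVec amat σ θ)
        + (Δ θ + 1) • Stmt3Aux.nVec amat θ) ![0, 0, Real.sqrt ((amat θ).det)]
        = ((∑ σ, Δv σ θ • Stmt3Aux.bVec amat σ θ)
        + (Δ θ + 1) • Stmt3Aux.nVec amat θ) 2 * Real.sqrt ((amat θ).det) from by
          simp [dot3, Fin.sum_univ_three], h3]
    rw [hD]
    have hne1 : Δ θ + 1 ≠ 0 := by
      intro h; apply hΔne θ hθ; linarith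
    exact mul_ne_zero hne1 (Real.sqrt_pos.2 (hdet θ hθ)).ne'
  · -- Gram of a
    intro θ hθ α β
    exact Stmt3Aux.aVec_dot (ha00 θ hθ) (hdet θ hθ) (hamat_symm θ) α β
  · -- representation of D
    intro θ hθ α
    rfl
  · -- representation of d
    intro θ hθ
    rfl
  · -- Gram identity
    intro θ hθ ζ hζ i j
    have h00 := ha00 θ hθ
    have hdd := hdet θ hθ
    have hmul := hmul1 θ hθ
    have hsym := hamat_symm θ
    have hisym := hinvsym θ hθ
    have hB10 : Bf 1 0 θ = Bf 0 1 θ := hBsym θ hθ 1 0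
    have e1 := Stmt3Aux.aVec_dot h00 hdd hsym
    have e2 := Stmt3Aux.bVec_dot_aVec hmul h00 hdd hsym
    have e3 := Stmt3Aux.bVec_dot_bVec hmul h00 hdd hsym hisym
    have e4 := Stmt3Aux.dot3_nVec_aVec h00 hdd
    have e5 := Stmt3Aux.dot3_nVec_bVec h00 hdd
    have e6 := Stmt3Aux.dot3_nVec_nVec h00 hdd
    have e2' : ∀ σ β, dot3 (Stmt3Aux.aVec amat β θ) (Stmt3Aux.bVec amat σ θ)
        = if σ = β then 1 else 0 := fun σ β => by
      rw [Stmt3Aux.dot3_comm]; exact e2 σ β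
    have e4' : ∀ β, dot3 (Stmt3Aux.aVec amat β θ) (Stmt3Aux.nVec amat θ) = 0 := fun β => by
      rw [Stmt3Aux.dot3_comm]; exact e4 β
    have e5' : ∀ σ, dot3 (Stmt3Aux.bVec amat σ θ) (Stmt3Aux.nVec amat θ) = 0 := fun σ => by
      rw [Stmt3Aux.dot3_comm]; exact e5 σ
    have hg00 : gm θ ζ 0 0 = amat θ 0 0 + ζ * P 0 0 θ + ζ^2 * Q 0 0 θ := hgmab θ ζ 0 0
    have hg01 : gm θ ζ 0 1 = amat θ 0 1 + ζ * P 0 1 θ + ζ^2 * Q 0 1 θ := hgmab θ ζ 0 1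
    have hg10 : gm θ ζ 1 0 = amat θ 1 0 + ζ * P 1 0 θ + ζ^2 * Q 1 0 θ := hgmab θ ζ 1 0
    have hg11 : gm θ ζ 1 1 = amat θ 1 1 + ζ * P 1 1 θ + ζ^2 * Q 1 1 θ := hgmab θ ζ 1 1
    have hg02 : gm θ ζ 0 2 = Δv 0 θ + ζ * U 0 θ := hgma3 θ ζ 0
    have hg12 : gm θ ζ 1 2 = Δv 1 θ + ζ * U 1 θ := hgma3 θ ζ 1
    have hg20 : gm θ ζ 2 0 = Δv 0 θ + ζ * U 0 θ := hgm3a θ ζ 0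
    have hg21 : gm θ ζ 2 1 = Δv 1 θ + ζ * U 1 θ := hgm3a θ ζ 1
    have hg22 : gm θ ζ 2 2 = V θ := hgm33 θ ζ
    fin_cases i <;> fin_cases j <;>
      simp only [Fin.zero_eta, Fin.mk_one, Fin.reduceFinMk, Matrix.cons_val_zero,
        Matrix.cons_val_one, Matrix.head_cons, Fin.isValue, Matrix.cons_val_two,
        Matrix.tail_cons]
    · rw [hg00, hP 0 0 θ, hQ 0 0 θ]
      simp only [Fin.sum_univ_two, Stmt3Aux.dot3_add_left, Stmt3Aux.dot3_add_right,
        Stmt3Aux.dot3_smul_left, Stmt3Aux.dot3_smul_right, e1, e2, e2', e3, e4, e4', e5, e5', e6]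
      norm_num
      first | tauto | ring
    · rw [hg01, hP 0 1 θ, hQ 0 1 θ]
      simp only [Fin.sum_univ_two, Stmt3Aux.dot3_add_left, Stmt3Aux.dot3_add_right,
        Stmt3Aux.dot3_smul_left, Stmt3Aux.dot3_smul_right, e1, e2, e2', e3, e4, e4', e5, e5', e6]
      norm_num
      first | (rw [hB10, hisym]; ring) | tauto | ring
    · rw [hg02, hU 0 θ]
      simp only [Fin.sum_univ_two, Stmt3Aux.dot3_add_left, Stmt3Aux.dot3_add_right,
        Stmt3Aux.dot3_smul_left, Stmt3Aux.dot3_smul_right, e1, e2, e2', e3, e4, e4', e5, e5', e6]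
      norm_num
      first | (rw [hisym]; ring) | tauto | ring
    · rw [hg10, hP 1 0 θ, hQ 1 0 θ]
      simp only [Fin.sum_univ_two, Stmt3Aux.dot3_add_left, Stmt3Aux.dot3_add_right,
        Stmt3Aux.dot3_smul_left, Stmt3Aux.dot3_smul_right, e1, e2, e2', e3, e4, e4', e5, e5', e6]
      norm_num
      first | (rw [hB10, hisym, hsym]; ring) | tauto | ring
    · rw [hg11, hP 1 1 θ, hQ 1 1 θ]
      simp only [Fin.sum_univ_two, Stmt3Aux.dot3_add_left, Stmt3Aux.dot3_add_right,
        Stmt3Aux.dot3_smul_left, Stmt3Aux.dot3_smul_right, e1, e2, e2', e3, e4, e4', e5, e5', e6]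
      norm_num
      first | tauto | ring
    · rw [hg12, hU 1 θ]
      simp only [Fin.sum_univ_two, Stmt3Aux.dot3_add_left, Stmt3Aux.dot3_add_right,
        Stmt3Aux.dot3_smul_left, Stmt3Aux.dot3_smul_right, e1, e2, e2', e3, e4, e4', e5, e5', e6]
      norm_num
      first | (rw [hisym]; ring) | tauto | ring
    · rw [hg20, hU 0 θ]
      simp only [Fin.sum_univ_two, Stmt3Aux.dot3_add_left, Stmt3Aux.dot3_add_right,
        Stmt3Aux.dot3_smul_left, Stmt3Aux.dot3_smul_right, e1, e2, e2', e3, e4, e4', e5, e5', e6]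
      norm_num
      first | (rw [hisym]; ring) | tauto | ring
      all_goals tauto
    · rw [hg21, hU 1 θ]
      simp only [Fin.sum_univ_two, Stmt3Aux.dot3_add_left, Stmt3Aux.dot3_add_right,
        Stmt3Aux.dot3_smul_left, Stmt3Aux.dot3_smul_right, e1, e2, e2', e3, e4, e4', e5, e5', e6]
      norm_num
      first | (rw [hisym]; ring) | tauto | ring
      all_goals tauto
    · rw [hg22, hV θ]
      simp only [Fin.sum_univ_two, Stmt3Aux.dot3_add_left, Stmt3Aux.dot3_add_right,
        Stmt3Aux.dot3_smul_left, Stmt3Aux.dot3_smul_right, e1, e2, e2', e3, e4, e4', e5, e5', e6]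
      norm_num
      first | (rw [hisym]; ring) | tauto | ring
end
end

section
/- Let B be an open subset of ℝ³ and let [Q_{ij}] : B → ℝ^{3×3} be a smooth matrix field such that Q(x) is an orthogonal matrix for every x ∈ B (so that Q⁻¹ = Qᵀ). Define C^q_{ij} := Q_{lq} ∂_j Q_{li} (summation over l). Then ∂_k C^i_{jl} − ∂_l C^i_{jk} + C^h_{jl} C^i_{hk} − C^h_{jk} C^i_{hl} = 0 at every point of B, for all indices i,j,k,l; that is, C is a solution of the curvature equation with vanishing total curvature. -/
open Set
open scoped BigOperators

noncomputable section

/-- Partial derivative of a scalar field on ℝ³. -/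
def pd3 (k : Fin 3) (f : (Fin 3 → ℝ) → ℝ) (x : Fin 3 → ℝ) : ℝ :=
  fderiv ℝ f x (Pi.single k 1)

lemma pd3_sum {f : Fin 3 → (Fin 3 → ℝ) → ℝ} {x : Fin 3 → ℝ} (k : Fin 3)
    (h : ∀ m, DifferentiableAt ℝ (f m) x) :
    pd3 k (fun y => ∑ m, f m y) x = ∑ m, pd3 k (f m) x := by
  unfold pd3
  rw [fderiv_fun_sum (fun m _ => h m)]
  simp

lemma pd3_mul {f g : (Fin 3 → ℝ) → ℝ} {x : Fin 3 → ℝ} (k : Fin 3)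
    (hf : DifferentiableAt ℝ f x) (hg : DifferentiableAt ℝ g x) :
    pd3 k (fun y => f y * g y) x = pd3 k f x * g x + f x * pd3 k g x := by
  unfold pd3
  rw [fderiv_fun_mul hf hg]
  simp
  ring

lemma pd3_differentiableAt {f : (Fin 3 → ℝ) → ℝ} {x : Fin 3 → ℝ} (d : Fin 3)
    (hf : ContDiffAt ℝ (⊤ : ℕ∞) f x) : DifferentiableAt ℝ (pd3 d f) x := by
  have h1 : ContDiffAt ℝ 1 (fderiv ℝ f) x := hf.fderiv_right (by rw [show (1+1 : WithTop ℕ∞) = ((1+1:ℕ∞) : WithTop ℕ∞) by norm_cast]; exact WithTop.coe_le_coe.2 le_top)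
  exact (h1.differentiableAt one_ne_zero).clm_apply (differentiableAt_const _)

lemma pd3_comm {f : (Fin 3 → ℝ) → ℝ} {x : Fin 3 → ℝ} (k l : Fin 3)
    (hf : ContDiffAt ℝ (⊤ : ℕ∞) f x) :
    pd3 k (pd3 l f) x = pd3 l (pd3 k f) x := by
  have h1 : ContDiffAt ℝ 1 (fderiv ℝ f) x := hf.fderiv_right (by rw [show (1+1 : WithTop ℕ∞) = ((1+1:ℕ∞) : WithTop ℕ∞) by norm_cast]; exact WithTop.coe_le_coe.2 le_top)
  have hd : DifferentiableAt ℝ (fderiv ℝ f) x := h1.differentiableAt one_ne_zero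
  have hsym : IsSymmSndFDerivAt ℝ f x := hf.isSymmSndFDerivAt (by rw [minSmoothness_of_isRCLikeNormedField, show (2 : WithTop ℕ∞) = ((2:ℕ∞) : WithTop ℕ∞) by norm_cast]; exact WithTop.coe_le_coe.2 le_top)
  have key : ∀ a b : Fin 3,
      pd3 a (pd3 b f) x
        = fderiv ℝ (fderiv ℝ f) x (Pi.single a 1) (Pi.single b 1) := by
    intro a b
    show fderiv ℝ (fun y => fderiv ℝ f y (Pi.single b 1)) x (Pi.single a 1) = _
    rw [fderiv_clm_apply hd (differentiableAt_const _)]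
    simp
  rw [key, key, hsym]

lemma rowsum (q : Fin 3 → Fin 3 → ℝ)
    (h : ∀ a b : Fin 3, (∑ m, q a m * q b m) = if a = b then (1:ℝ) else 0)
    (u v : Fin 3 → ℝ) :
    (∑ m, (∑ a, q a m * u a) * (∑ b, q b m * v b)) = ∑ a, u a * v a := by
  have h00 := h 0 0; have h01 := h 0 1; have h02 := h 0 2
  have h10 := h 1 0; have h11 := h 1 1; have h12 := h 1 2
  have h20 := h 2 0; have h21 := h 2 1; have h22 := h 2 2
  simp only [Fin.sum_univ_three] at *
  rw [if_neg (by decide)] at h01 h02 h10 h12 h20 h21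
  norm_num at h00 h11 h22
  linear_combination (u 0 * v 0) * h00 + (u 0 * v 1) * h01 + (u 0 * v 2) * h02
    + (u 1 * v 0) * h10 + (u 1 * v 1) * h11 + (u 1 * v 2) * h12
    + (u 2 * v 0) * h20 + (u 2 * v 1) * h21 + (u 2 * v 2) * h22

/-- The contorsion field `C^q_{ij} := Q_{lq} ∂_j Q_{li}` built from a smooth orthogonal
matrix field is a solution of the curvature equation with vanishing total curvature. -/
theorem stmt9
    (B : Set (Fin 3 → ℝ)) (hBopen : IsOpen B)
    (Q : Fin 3 → Fin 3 → (Fin 3 → ℝ) → ℝ)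
    (hQs : ∀ i j, ContDiffOn ℝ (⊤ : ℕ∞) (Q i j) B)
    (hQorth : ∀ x ∈ B, ∀ i j : Fin 3,
      (∑ l, Q l i x * Q l j x) = if i = j then (1 : ℝ) else 0)
    (C : Fin 3 → Fin 3 → Fin 3 → (Fin 3 → ℝ) → ℝ)
    (hC : ∀ q i j x, C q i j x = ∑ l, Q l q x * pd3 j (Q l i) x) :
    ∀ x ∈ B, ∀ i j k l : Fin 3,
      pd3 k (C i j l) x - pd3 l (C i j k) x
        + (∑ m, C m j l x * C i m k x) - (∑ m, C m j k x * C i m l x) = 0 := by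
  intro x hx i j k l
  have hmem : B ∈ nhds x := hBopen.mem_nhds hx
  have hQca : ∀ m c : Fin 3, ContDiffAt ℝ (⊤ : ℕ∞) (Q m c) x :=
    fun m c => (hQs m c).contDiffAt hmem
  have hdQ : ∀ m c : Fin 3, DifferentiableAt ℝ (Q m c) x :=
    fun m c => ((hQca m c).differentiableAt (by simp))
  have hdQ' : ∀ m c d : Fin 3, DifferentiableAt ℝ (pd3 d (Q m c)) x :=
    fun m c d => pd3_differentiableAt d (hQca m c)
  have hCfun : ∀ q' i' j' : Fin 3,
      C q' i' j' = fun y => ∑ m, Q m q' y * pd3 j' (Q m i') y :=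
    fun q' i' j' => funext (hC q' i' j')
  -- derivative of a C-component
  have hpdC : ∀ i' j' d' d : Fin 3,
      pd3 d (C i' j' d') x
        = ∑ m, (pd3 d (Q m i') x * pd3 d' (Q m j') x
            + Q m i' x * pd3 d (pd3 d' (Q m j')) x) := by
    intro i' j' d' d
    rw [hCfun]
    rw [pd3_sum (f := fun m y => Q m i' y * pd3 d' (Q m j') y) d (fun m => (hdQ m i').mul (hdQ' m j' d'))]
    exact Finset.sum_congr rfl fun m _ => pd3_mul d (hdQ m i') (hdQ' m j' d')
  -- differentiated orthogonality
  have horthd : ∀ c e d : Fin 3,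
      (∑ m, (pd3 d (Q m c) x * Q m e x + Q m c x * pd3 d (Q m e) x)) = 0 := by
    intro c e d
    have heq : (fun y => ∑ m, Q m c y * Q m e y)
        =ᶠ[nhds x] fun _ => (if c = e then (1:ℝ) else 0) := by
      filter_upwards [hmem] with y hy
      exact hQorth y hy c e
    have h0 : pd3 d (fun y => ∑ m, Q m c y * Q m e y) x = 0 := by
      unfold pd3
      rw [heq.fderiv_eq]
      simp
    rw [pd3_sum (f := fun m y => Q m c y * Q m e y) d (fun m => (hdQ m c).mul (hdQ m e))] at h0
    rw [← h0]
    exact Finset.sum_congr rfl fun m _ => (pd3_mul d (hdQ m c) (hdQ m e)).symm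
  -- rows orthonormality (Q Qᵀ = 1)
  have hrow : ∀ a b : Fin 3, (∑ m, Q a m x * Q b m x) = if a = b then (1:ℝ) else 0 := by
    have h1 : Matrix.transpose (Matrix.of fun a b => Q a b x)
        * (Matrix.of fun a b => Q a b x) = 1 := by
      ext i' j'
      simp only [Matrix.mul_apply, Matrix.transpose_apply, Matrix.of_apply,
        Matrix.one_apply]
      exact hQorth x hx i' j'
    have h2 := mul_eq_one_comm.mp h1
    intro a b
    have h3 := congrFun (congrFun h2 a) b
    simpa [Matrix.mul_apply, Matrix.transpose_apply, Matrix.one_apply] using h3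
  -- rewriting C i m k via differentiated orthogonality
  have hflip : ∀ m d : Fin 3, C i m d x = -∑ b, Q b m x * pd3 d (Q b i) x := by
    intro m d
    have h := horthd m i d
    rw [hC]
    simp only [Fin.sum_univ_three] at h ⊢
    linear_combination h
  -- quadratic terms
  have hquad : ∀ d d' : Fin 3,
      (∑ m, C m j d x * C i m d' x)
        = -∑ a, pd3 d (Q a j) x * pd3 d' (Q a i) x := by
    intro d d'
    have hterm : ∀ m : Fin 3, C m j d x * C i m d' x
        = -((∑ a, Q a m x * pd3 d (Q a j) x) * (∑ b, Q b m x * pd3 d' (Q b i) x)) := by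
      intro m
      rw [hC, hflip m d']
      ring
    calc (∑ m, C m j d x * C i m d' x)
        = ∑ m, -((∑ a, Q a m x * pd3 d (Q a j) x) * (∑ b, Q b m x * pd3 d' (Q b i) x)) :=
          Finset.sum_congr rfl fun m _ => hterm m
      _ = -∑ m, (∑ a, Q a m x * pd3 d (Q a j) x) * (∑ b, Q b m x * pd3 d' (Q b i) x) := by
          rw [Finset.sum_neg_distrib]
      _ = -∑ a, pd3 d (Q a j) x * pd3 d' (Q a i) x := by
          rw [rowsum (fun a b => Q a b x) hrow]
  have hcomm : ∀ m : Fin 3,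
      pd3 k (pd3 l (Q m j)) x = pd3 l (pd3 k (Q m j)) x :=
    fun m => pd3_comm k l (hQca m j)
  rw [hpdC i j l k, hpdC i j k l, hquad l k, hquad k l]
  simp only [Fin.sum_univ_three, hcomm 0, hcomm 1, hcomm 2]
  ring
end
end
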